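/- The weighted edit distance dist_γ is a metric on Σ* if and only if for all a,b,c ∈ Σ: (i) γ(a,‐) = γ(‐,a) > 0; (ii) γ(a,b) > 0 if a ≠ b and γ(a,a) = 0; (iii) if γ(a,b) < γ(a,‐) + γ(‐,b) then γ(a,b) = γ(b,a); (iv) γ(a,‐) ≤ γ(a,b) + γ(b,‐); and (v) min{γ(a,c), γ(a,‐)+γ(‐,c)} ≤ γ(a,b)+γ(b,c). -/

import Mathlib

open List

/-- A scoring matrix on alphabet `σ`; `none` represents the space symbol `‐`.
The value at `(none, none)` is irrelevant (never used on admissible columns). -/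
abbrev Scoring (σ : Type*) := Option σ → Option σ → ℝ

/-- `A` is an alignment of the sequences `s` and `t`: a list of columns over
`Σ₋ × Σ₋` with no column `(‐,‐)`, whose first (resp. second) components with
spaces removed spell `s` (resp. `t`). -/
def IsAlignment {σ : Type*} (A : List (Option σ × Option σ)) (s t : List σ) : Prop :=
  (∀ c ∈ A, c ≠ ((none : Option σ), (none : Option σ))) ∧
  A.filterMap Prod.fst = s ∧ A.filterMap Prod.snd = t

/-- The score of an alignment: the sum of `γ` over its columns. -/
def alignScore {σ : Type*} (γ : Scoring σ) (A : List (Option σ × Option σ)) : ℝ :=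
  (A.map fun c => γ c.1 c.2).sum

/-- The weighted edit distance: minimum alignment score. -/
noncomputable def editDist {σ : Type*} (γ : Scoring σ) (s t : List σ) : ℝ :=
  sInf {x | ∃ A, IsAlignment A s t ∧ alignScore γ A = x}

/-- The normalized edit distance: minimum normalized alignment score
(score divided by number of columns); for `s = t = ε` it is `0`. -/
noncomputable def ndist {σ : Type*} (γ : Scoring σ) (s t : List σ) : ℝ :=
  sInf {x | ∃ A, IsAlignment A s t ∧ alignScore γ A / (A.length : ℝ) = x}

/-- A walk in the digraph `D(γ)`: a list of vertices of `Σ₋` in which the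
space `‐` never follows the space. -/
def IsWalkSeq {σ : Type*} (W : List (Option σ)) : Prop :=
  W.Chain' (fun a b => ¬(a = none ∧ b = none))

/-- The weight of a walk: the sum of the weights of its consecutive arcs. -/
def walkWeight {σ : Type*} (γ : Scoring σ) (W : List (Option σ)) : ℝ :=
  ((W.zip W.tail).map fun p => γ p.1 p.2).sum

/-- `D(γ)` has a cycle of negative total weight (cycles start and end at a
vertex of `Σ`). -/
def HasNegCycle {σ : Type*} (γ : Scoring σ) : Prop :=
  ∃ (a : σ) (W : List (Option σ)),
    IsWalkSeq (some a :: (W ++ [some a])) ∧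
    walkWeight γ (some a :: (W ++ [some a])) < 0

/-- The shortest-walk distance from `x` to `y` in `D(γ)`. -/
noncomputable def walkDist {σ : Type*} (γ : Scoring σ) (x y : Option σ) : ℝ :=
  sInf {w | ∃ W : List (Option σ), IsWalkSeq W ∧ W.head? = some x ∧
    W.getLast? = some y ∧ walkWeight γ W = w}

/-- A column of an extended alignment: a nonempty sequence over `Σ₋`, with at
least one non-space symbol, no two consecutive spaces, and not having a space
at both ends. -/
def IsExtCol {σ : Type*} (c : List (Option σ)) : Prop :=
  c ≠ [] ∧ (∃ x ∈ c, x ≠ none) ∧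
  c.Chain' (fun a b => ¬(a = none ∧ b = none)) ∧
  ¬(c.head? = some none ∧ c.getLast? = some none)

/-- An extended alignment of `s, t`: a list of admissible columns whose first
symbols (spaces removed) spell `s` and whose last symbols spell `t`. -/
def IsExtAlignment {σ : Type*} (E : List (List (Option σ))) (s t : List σ) : Prop :=
  (∀ c ∈ E, IsExtCol c) ∧
  E.filterMap (fun c => c.head?.bind id) = s ∧
  E.filterMap (fun c => c.getLast?.bind id) = t

/-- The extended edit distance: minimum total score over extended alignments,
where the score of a column is the sum of `γ` over its consecutive pairs. -/
noncomputable def edist {σ : Type*} (γ : Scoring σ) (s t : List σ) : ℝ :=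
  sInf {x | ∃ E, IsExtAlignment E s t ∧ (E.map (walkWeight γ)).sum = x}

/-- `f` is a premetric: `f x x = 0` and `f x y ≥ 0`. -/
def IsPremetric {σ : Type*} (f : List σ → List σ → ℝ) : Prop :=
  (∀ s, f s s = 0) ∧ (∀ s t, 0 ≤ f s t)


namespace EDaux
variable {σ : Type*}

lemma score_cons (γ : Scoring σ) (c : Option σ × Option σ) (A : List (Option σ × Option σ)) :
    alignScore γ (c :: A) = γ c.1 c.2 + alignScore γ A := by
  simp [alignScore]

lemma score_append (γ : Scoring σ) (A B : List (Option σ × Option σ)) :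
    alignScore γ (A ++ B) = alignScore γ A + alignScore γ B := by
  simp [alignScore]

lemma len_le {A : List (Option σ × Option σ)}
    (h : ∀ c ∈ A, c ≠ ((none : Option σ), (none : Option σ))) :
    A.length ≤ (A.filterMap Prod.fst).length + (A.filterMap Prod.snd).length := by
  induction A with
  | nil => simp
  | cons c A ih =>
    obtain ⟨x, y⟩ := c
    have hc := h (x, y) mem_cons_self
    have ih' := ih (fun c hc' => h c (mem_cons_of_mem _ hc'))
    cases x <;> cases y <;> simp_all [List.filterMap_cons] <;> omega

lemma filterMap_none (l : List σ) :
    (l.filterMap fun _ => (none : Option (Option σ))) = [] := by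
  induction l <;> simp_all [List.filterMap_cons]

lemma exists_alignment (s t : List σ) :
    ∃ A : List (Option σ × Option σ), IsAlignment A s t := by
  refine ⟨s.map (fun a => (some a, none)) ++ t.map (fun b => (none, some b)), ?_, ?_, ?_⟩
  · intro c hc
    rcases List.mem_append.1 hc with h | h <;> obtain ⟨z, _, rfl⟩ := List.mem_map.1 h <;> simp
  · simp [List.filterMap_append, List.filterMap_map, Function.comp_def, filterMap_some,
      filterMap_none]
  · simp [List.filterMap_append, List.filterMap_map, Function.comp_def, filterMap_some,
      filterMap_none]

lemma set_nonempty (γ : Scoring σ) (s t : List σ) :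
    {x | ∃ A, IsAlignment A s t ∧ alignScore γ A = x}.Nonempty := by
  obtain ⟨A, hA⟩ := exists_alignment s t
  exact ⟨alignScore γ A, A, hA, rfl⟩

/-- The set of alignments of `[a]` and `[]`. -/
lemma set_one_nil (γ : Scoring σ) (a : σ) :
    {x | ∃ A, IsAlignment A [a] [] ∧ alignScore γ A = x} = {γ (some a) none} := by
  ext x
  simp only [Set.mem_setOf_eq, Set.mem_singleton_iff]
  constructor
  · rintro ⟨A, ⟨hv, hf, hs⟩, rfl⟩
    have hlen : A.length ≤ 1 := by
      have := len_le hv; rw [hf, hs] at this; simpa using this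
    match A, hlen with
    | [], _ => simp at hf
    | [(x, y)], _ =>
      cases x <;> cases y <;> simp_all [List.filterMap_cons, alignScore]
  · rintro rfl
    exact ⟨[(some a, none)], ⟨by simp, by simp [List.filterMap_cons],
      by simp [List.filterMap_cons]⟩, by simp [alignScore]⟩

lemma set_nil_one (γ : Scoring σ) (a : σ) :
    {x | ∃ A, IsAlignment A [] [a] ∧ alignScore γ A = x} = {γ none (some a)} := by
  ext x
  simp only [Set.mem_setOf_eq, Set.mem_singleton_iff]
  constructor
  · rintro ⟨A, ⟨hv, hf, hs⟩, rfl⟩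
    have hlen : A.length ≤ 1 := by
      have := len_le hv; rw [hf, hs] at this; simpa using this
    match A, hlen with
    | [], _ => simp at hs
    | [(x, y)], _ =>
      cases x <;> cases y <;> simp_all [List.filterMap_cons, alignScore]
  · rintro rfl
    exact ⟨[(none, some a)], ⟨by simp, by simp [List.filterMap_cons],
      by simp [List.filterMap_cons]⟩, by simp [alignScore]⟩

lemma set_one_one (γ : Scoring σ) (a b : σ) :
    {x | ∃ A, IsAlignment A [a] [b] ∧ alignScore γ A = x} =
      {γ (some a) (some b), γ (some a) none + γ none (some b)} := by
  ext x
  simp only [Set.mem_setOf_eq, Set.mem_insert_iff, Set.mem_singleton_iff]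
  constructor
  · rintro ⟨A, ⟨hv, hf, hs⟩, rfl⟩
    have hlen : A.length ≤ 2 := by
      have := len_le hv; rw [hf, hs] at this; simpa using this
    match A, hlen with
    | [], _ => simp at hf
    | [(x, y)], _ =>
      cases x <;> cases y <;> simp_all [List.filterMap_cons, alignScore]
    | [(x, y), (z, w)], _ =>
      cases x <;> cases y <;> cases z <;> cases w <;>
        simp_all [List.filterMap_cons, alignScore, add_comm]
  · rintro (rfl | rfl)
    · exact ⟨[(some a, some b)], ⟨by simp, by simp [List.filterMap_cons],
        by simp [List.filterMap_cons]⟩, by simp [alignScore]⟩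
    · exact ⟨[(some a, none), (none, some b)], ⟨by simp, by simp [List.filterMap_cons],
        by simp [List.filterMap_cons]⟩, by simp [alignScore]⟩

lemma editDist_one_nil (γ : Scoring σ) (a : σ) : editDist γ [a] [] = γ (some a) none := by
  rw [editDist, set_one_nil, csInf_singleton]

lemma editDist_nil_one (γ : Scoring σ) (a : σ) : editDist γ [] [a] = γ none (some a) := by
  rw [editDist, set_nil_one, csInf_singleton]

lemma editDist_one_one (γ : Scoring σ) (a b : σ) :
    editDist γ [a] [b] = min (γ (some a) (some b)) (γ (some a) none + γ none (some b)) := by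
  rw [editDist, set_one_one, csInf_pair]

section Swap

noncomputable def swapCol (γ : Scoring σ) : Option σ × Option σ → List (Option σ × Option σ)
  | (some a, some b) =>
      if γ (some a) (some b) < γ (some a) none + γ none (some b)
      then [(some b, some a)] else [(some b, none), (none, some a)]
  | (some a, none) => [(none, some a)]
  | (none, y) => [(y, none)]

variable (γ : Scoring σ)

lemma swap_fst (A : List (Option σ × Option σ)) :
    ((A.flatMap (swapCol γ)).filterMap Prod.fst) = A.filterMap Prod.snd := by
  induction A with
  | nil => simp
  | cons c A ih =>
    obtain ⟨x, y⟩ := c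
    cases x <;> cases y <;>
      simp_all [swapCol, List.flatMap_cons, List.filterMap_append, List.filterMap_cons] <;>
      split <;> simp [List.filterMap_cons, ih]

lemma swap_snd (A : List (Option σ × Option σ)) :
    ((A.flatMap (swapCol γ)).filterMap Prod.snd) = A.filterMap Prod.fst := by
  induction A with
  | nil => simp
  | cons c A ih =>
    obtain ⟨x, y⟩ := c
    cases x <;> cases y <;>
      simp_all [swapCol, List.flatMap_cons, List.filterMap_append, List.filterMap_cons] <;>
      split <;> simp [List.filterMap_cons, ih]

lemma swap_valid (A : List (Option σ × Option σ))
    (hA : ∀ c ∈ A, c ≠ ((none : Option σ), (none : Option σ))) :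
    ∀ c ∈ A.flatMap (swapCol γ), c ≠ ((none : Option σ), (none : Option σ)) := by
  induction A with
  | nil => simp
  | cons c A ih =>
    intro d hd
    obtain ⟨x, y⟩ := c
    have hc := hA (x, y) mem_cons_self
    have ih' := ih (fun c hc' => hA c (mem_cons_of_mem _ hc'))
    rw [List.flatMap_cons, List.mem_append] at hd
    rcases hd with hd | hd
    · cases x with
      | none =>
        cases y with
        | none => simp at hc
        | some b => simp [swapCol] at hd; subst hd; simp
      | some a =>
        cases y with
        | none => simp [swapCol] at hd; subst hd; simp
        | some b =>
          simp only [swapCol] at hd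
          split at hd <;> simp only [List.mem_cons, List.mem_singleton, List.not_mem_nil,
            or_false] at hd <;> rcases hd with rfl | rfl <;> simp
    · exact ih' d hd

lemma swap_score (A : List (Option σ × Option σ))
    (hsp : ∀ a : σ, γ (some a) none = γ none (some a))
    (hsymc : ∀ a b : σ, γ (some a) (some b) < γ (some a) none + γ none (some b) →
      γ (some a) (some b) = γ (some b) (some a))
    (hA : ∀ c ∈ A, c ≠ ((none : Option σ), (none : Option σ))) :
    alignScore γ (A.flatMap (swapCol γ)) ≤ alignScore γ A := by
  induction A with
  | nil => simp [alignScore]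
  | cons c A ih =>
    obtain ⟨x, y⟩ := c
    have hc := hA (x, y) mem_cons_self
    have ih' := ih (fun c hc' => hA c (mem_cons_of_mem _ hc'))
    rw [List.flatMap_cons, score_append, score_cons]
    have hcol : alignScore γ (swapCol γ (x, y)) ≤ γ x y := by
      cases x with
      | none =>
        cases y with
        | none => simp at hc
        | some b => simp [swapCol, alignScore, hsp b]
      | some a =>
        cases y with
        | none => simp [swapCol, alignScore, hsp a]
        | some b =>
          simp only [swapCol]
          split
          · next h => simp [alignScore, (hsymc a b h).symm.le]
          · next h =>
            push_neg at h
            simp only [alignScore, List.map_cons, List.map_nil, List.sum_cons, List.sum_nil]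
            have h1 := hsp a
            have h2 := hsp b
            linarith
    try dsimp only at *
    linarith

end Swap

section Comp

noncomputable def mergeCol (γ : Scoring σ) : Option σ → Option σ → List (Option σ × Option σ)
  | some a, some c =>
      if γ (some a) (some c) ≤ γ (some a) none + γ none (some c)
      then [(some a, some c)] else [(some a, none), (none, some c)]
  | some a, none => [(some a, none)]
  | none, some c => [(none, some c)]
  | none, none => []

noncomputable def comp (γ : Scoring σ) :
    List (Option σ × Option σ) → List (Option σ × Option σ) → List (Option σ × Option σ)
  | [], B => B
  | A, [] => A
  | (x, none) :: A', B => (x, none) :: comp γ A' B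
  | (x, some b) :: A', (none, z) :: B' => (none, z) :: comp γ ((x, some b) :: A') B'
  | (x, some _) :: A', (some _, z) :: B' => mergeCol γ x z ++ comp γ A' B'
termination_by A B => A.length + B.length

variable (γ : Scoring σ)

lemma mergeCol_fst (x z : Option σ) :
    (mergeCol γ x z).filterMap Prod.fst = x.toList := by
  cases x <;> cases z <;> simp [mergeCol] <;> split <;> simp

lemma mergeCol_snd (x z : Option σ) :
    (mergeCol γ x z).filterMap Prod.snd = z.toList := by
  cases x <;> cases z <;> simp [mergeCol] <;> split <;> simp

lemma mergeCol_valid (x z : Option σ) :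
    ∀ c ∈ mergeCol γ x z, c ≠ ((none : Option σ), (none : Option σ)) := by
  intro c hc
  cases x with
  | none =>
    cases z with
    | none => simp [mergeCol] at hc
    | some w => simp [mergeCol] at hc; subst hc; simp
  | some v =>
    cases z with
    | none => simp [mergeCol] at hc; subst hc; simp
    | some w =>
      simp only [mergeCol] at hc
      split at hc <;> simp only [List.mem_cons, List.mem_singleton, List.not_mem_nil,
        or_false] at hc <;> first
        | (subst hc; simp)
        | (rcases hc with rfl | rfl <;> simp)

lemma comp_fst (A B : List (Option σ × Option σ))
    (h : A.filterMap Prod.snd = B.filterMap Prod.fst) :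
    (comp γ A B).filterMap Prod.fst = A.filterMap Prod.fst := by
  induction A, B using comp.induct with
  | case1 B =>
    rw [comp.eq_1]
    simpa using h.symm
  | case2 A hA => rw [comp.eq_2 γ A hA]
  | case3 x A' B hB ih =>
    rw [comp.eq_3 γ B x A' hB]
    simp only [List.filterMap_cons] at h ⊢
    cases x <;> simp_all
  | case4 x b A' z B' ih =>
    rw [comp.eq_4]
    simp only [List.filterMap_cons] at h ⊢
    exact ih h
  | case5 x b A' b' z B' ih =>
    rw [comp.eq_5]
    simp only [List.filterMap_cons] at h
    obtain ⟨rfl, h2⟩ : b = b' ∧ A'.filterMap Prod.snd = B'.filterMap Prod.fst := by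
      simpa using h
    rw [List.filterMap_append, mergeCol_fst, ih h2]
    cases x <;> simp [List.filterMap_cons, Option.toList]

lemma comp_snd (A B : List (Option σ × Option σ))
    (h : A.filterMap Prod.snd = B.filterMap Prod.fst) :
    (comp γ A B).filterMap Prod.snd = B.filterMap Prod.snd := by
  induction A, B using comp.induct with
  | case1 B => rw [comp.eq_1]
  | case2 A hA =>
    rw [comp.eq_2 γ A hA]
    simpa using h
  | case3 x A' B hB ih =>
    rw [comp.eq_3 γ B x A' hB]
    simp only [List.filterMap_cons] at h ⊢
    exact ih h
  | case4 x b A' z B' ih =>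
    rw [comp.eq_4]
    simp only [List.filterMap_cons] at h ⊢
    cases z <;> simp_all
  | case5 x b A' b' z B' ih =>
    rw [comp.eq_5]
    simp only [List.filterMap_cons] at h
    obtain ⟨rfl, h2⟩ : b = b' ∧ A'.filterMap Prod.snd = B'.filterMap Prod.fst := by
      simpa using h
    rw [List.filterMap_append, mergeCol_snd, ih h2]
    cases z <;> simp [List.filterMap_cons, Option.toList]

lemma comp_valid (A B : List (Option σ × Option σ))
    (hA : ∀ c ∈ A, c ≠ ((none : Option σ), (none : Option σ)))
    (hB : ∀ c ∈ B, c ≠ ((none : Option σ), (none : Option σ))) :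
    ∀ c ∈ comp γ A B, c ≠ ((none : Option σ), (none : Option σ)) := by
  induction A, B using comp.induct with
  | case1 B => rw [comp.eq_1]; exact hB
  | case2 A hA' => rw [comp.eq_2 γ A hA']; exact hA
  | case3 x A' B hB' ih =>
    rw [comp.eq_3 γ B x A' hB']
    intro c hc
    rcases List.mem_cons.1 hc with rfl | hc
    · exact hA _ mem_cons_self
    · exact ih (fun c h => hA c (mem_cons_of_mem _ h)) hB c hc
  | case4 x b A' z B' ih =>
    rw [comp.eq_4]
    intro c hc
    rcases List.mem_cons.1 hc with rfl | hc
    · exact hB _ mem_cons_self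
    · exact ih hA (fun c h => hB c (mem_cons_of_mem _ h)) c hc
  | case5 x b A' b' z B' ih =>
    rw [comp.eq_5]
    intro c hc
    rcases List.mem_append.1 hc with hc | hc
    · exact mergeCol_valid γ x z c hc
    · exact ih (fun c h => hA c (mem_cons_of_mem _ h))
        (fun c h => hB c (mem_cons_of_mem _ h)) c hc

lemma comp_score (A B : List (Option σ × Option σ))
    (hsp : ∀ a : σ, γ (some a) none = γ none (some a))
    (hpos : ∀ a : σ, 0 < γ (some a) none)
    (hsymc : ∀ a b : σ, γ (some a) (some b) < γ (some a) none + γ none (some b) →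
      γ (some a) (some b) = γ (some b) (some a))
    (hiv : ∀ a b : σ, γ (some a) none ≤ γ (some a) (some b) + γ (some b) none)
    (hv : ∀ a b c : σ, min (γ (some a) (some c)) (γ (some a) none + γ none (some c)) ≤
      γ (some a) (some b) + γ (some b) (some c))
    (h : A.filterMap Prod.snd = B.filterMap Prod.fst) :
    alignScore γ (comp γ A B) ≤ alignScore γ A + alignScore γ B := by
  have hIc : ∀ b c : σ, γ none (some c) ≤ γ (some b) (some c) + γ none (some b) := by
    intro b c
    by_cases hbc : γ (some b) (some c) < γ (some b) none + γ none (some c)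
    · have h1 := hsymc b c hbc
      have h2 := hiv c b
      have h3 := hsp b
      have h4 := hsp c
      linarith
    · push_neg at hbc
      have h1 := hpos b
      have h3 := hsp b
      linarith
  induction A, B using comp.induct with
  | case1 B =>
    rw [comp.eq_1]
    have : alignScore γ ([] : List (Option σ × Option σ)) = 0 := by simp [alignScore]
    linarith
  | case2 A hA =>
    rw [comp.eq_2 γ A hA]
    have : alignScore γ ([] : List (Option σ × Option σ)) = 0 := by simp [alignScore]
    linarith
  | case3 x A' B hB ih =>
    rw [comp.eq_3 γ B x A' hB]
    simp only [score_cons] at *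
    try dsimp only at *
    simp only [List.filterMap_cons] at h
    have := ih h
    linarith
  | case4 x b A' z B' ih =>
    rw [comp.eq_4]
    simp only [score_cons] at *
    try dsimp only at *
    simp only [List.filterMap_cons] at h
    have := ih h
    linarith
  | case5 x b A' b' z B' ih =>
    rw [comp.eq_5]
    simp only [score_append, score_cons] at *
    try dsimp only at *
    simp only [List.filterMap_cons] at h
    obtain ⟨rfl, h2⟩ : b = b' ∧ A'.filterMap Prod.snd = B'.filterMap Prod.fst := by
      simpa using h
    have hrec := ih h2
    have hcol : alignScore γ (mergeCol γ x z) ≤ γ x (some b) + γ (some b) z := by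
      cases x with
      | none =>
        cases z with
        | none =>
          have h1 := hpos b
          rw [hsp b] at h1
          simp only [mergeCol, alignScore, List.map_nil, List.sum_nil]
          have h2' := hpos b
          rw [← hsp b]
          linarith
        | some c =>
          simpa [mergeCol, alignScore, add_comm] using hIc b c
      | some a =>
        cases z with
        | none => simpa [mergeCol, alignScore] using hiv a b
        | some c =>
          have hmin := hv a b c
          simp only [mergeCol]
          split
          · next hle =>
            simp only [alignScore, List.map_cons, List.map_nil, List.sum_cons, List.sum_nil,
              add_zero]
            rw [min_eq_left hle] at hmin
            linarith
          · next hle =>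
            push_neg at hle
            simp only [alignScore, List.map_cons, List.map_nil, List.sum_cons, List.sum_nil,
              add_zero]
            rw [min_eq_right hle.le] at hmin
            linarith
    try dsimp only at hcol
    linarith

end Comp

lemma all_diag {A : List (Option σ × Option σ)}
    (h : ∀ c ∈ A, ∃ a : σ, c = (some a, some a)) :
    A.filterMap Prod.fst = A.filterMap Prod.snd := by
  induction A with
  | nil => rfl
  | cons c A ih =>
    obtain ⟨a, rfl⟩ := h c mem_cons_self
    simp [List.filterMap_cons, ih (fun c hc => h c (mem_cons_of_mem _ hc))]

end EDaux

theorem stmt7 {σ : Type*} [Fintype σ] (γ : Scoring σ) :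
    ((∀ s : List σ, editDist γ s s = 0) ∧
     (∀ s t : List σ, s ≠ t → 0 < editDist γ s t) ∧
     (∀ s t : List σ, editDist γ s t = editDist γ t s) ∧
     (∀ s t u : List σ, editDist γ s u ≤ editDist γ s t + editDist γ t u)) ↔
      (∀ a b c : σ,
        (γ (some a) none = γ none (some a) ∧ 0 < γ (some a) none) ∧
        (a ≠ b → 0 < γ (some a) (some b)) ∧ γ (some a) (some a) = 0 ∧
        (γ (some a) (some b) < γ (some a) none + γ none (some b) →
          γ (some a) (some b) = γ (some b) (some a)) ∧
        γ (some a) none ≤ γ (some a) (some b) + γ (some b) none ∧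
        min (γ (some a) (some c)) (γ (some a) none + γ none (some c)) ≤
          γ (some a) (some b) + γ (some b) (some c)) := by
  classical
  constructor
  · rintro ⟨h0, hposM, hsymM, htriM⟩ a b c
    have hE1 := EDaux.editDist_one_nil γ
    have hE2 := EDaux.editDist_nil_one γ
    have hE3 := EDaux.editDist_one_one γ
    have hspos : ∀ x : σ, 0 < γ (some x) none := by
      intro x; rw [← hE1 x]; exact hposM [x] [] (by simp)
    have hsp : ∀ x : σ, γ (some x) none = γ none (some x) := by
      intro x; rw [← hE1 x, ← hE2 x]; exact hsymM [x] []
    refine ⟨⟨hsp a, hspos a⟩, ?_, ?_, ?_, ?_, ?_⟩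
    · intro hab
      have h1 := hposM [a] [b] (by simpa using hab)
      rw [hE3] at h1
      exact lt_of_lt_of_le h1 (min_le_left _ _)
    · have h1 := h0 [a]
      rw [hE3] at h1
      rcases min_eq_iff.1 h1 with ⟨h3, _⟩ | ⟨h3, _⟩
      · exact h3
      · exfalso
        have := hspos a
        have h4 := hsp a
        linarith
    · intro hlt
      have h1 := hsymM [a] [b]
      rw [hE3, hE3] at h1
      rw [min_eq_left hlt.le] at h1
      have h2 : γ (some b) none + γ none (some a) = γ (some a) none + γ none (some b) := by
        rw [← hsp a, ← hsp b]; ring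
      rw [h2] at h1
      rcases min_eq_iff.1 h1.symm with ⟨h3, _⟩ | ⟨h3, _⟩
      · exact h3.symm
      · exfalso; linarith
    · have h1 := htriM [a] [b] []
      rw [hE1, hE3, hE1] at h1
      have h2 := min_le_left (γ (some a) (some b)) (γ (some a) none + γ none (some b))
      linarith
    · have h1 := htriM [a] [b] [c]
      rw [hE3, hE3, hE3] at h1
      exact le_trans h1 (add_le_add (min_le_left _ _) (min_le_left _ _))
  · intro hγ
    have hsp : ∀ x : σ, γ (some x) none = γ none (some x) := fun x => ((hγ x x x).1).1
    have hpos : ∀ x : σ, 0 < γ (some x) none := fun x => ((hγ x x x).1).2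
    have hne : ∀ x y : σ, x ≠ y → 0 < γ (some x) (some y) := fun x y h => (hγ x y y).2.1 h
    have hdiag : ∀ x : σ, γ (some x) (some x) = 0 := fun x => (hγ x x x).2.2.1
    have hsymc : ∀ x y : σ, γ (some x) (some y) < γ (some x) none + γ none (some y) →
        γ (some x) (some y) = γ (some y) (some x) := fun x y => (hγ x y y).2.2.2.1
    have hiv : ∀ x y : σ, γ (some x) none ≤ γ (some x) (some y) + γ (some y) none :=
      fun x y => (hγ x y y).2.2.2.2.1
    have hv : ∀ x y z : σ,
        min (γ (some x) (some z)) (γ (some x) none + γ none (some z)) ≤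
          γ (some x) (some y) + γ (some y) (some z) := fun x y z => (hγ x y z).2.2.2.2.2
    have hcol : ∀ p : Option σ × Option σ, p ≠ (none, none) → 0 ≤ γ p.1 p.2 := by
      rintro ⟨x, y⟩ hp
      cases x with
      | none =>
        cases y with
        | none => exact absurd rfl hp
        | some b => rw [← hsp b]; exact (hpos b).le
      | some a =>
        cases y with
        | none => exact (hpos a).le
        | some b =>
          by_cases hab : a = b
          · subst hab; rw [hdiag a]
          · exact (hne a b hab).le
    have hlow : ∀ A : List (Option σ × Option σ),
        (∀ c ∈ A, c ≠ ((none : Option σ), (none : Option σ))) → 0 ≤ alignScore γ A := by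
      intro A hA
      simp only [alignScore]
      apply List.sum_nonneg
      intro x hx
      obtain ⟨d, hd, rfl⟩ := List.mem_map.1 hx
      exact hcol d (hA d hd)
    have hEd_le : ∀ (s t : List σ) (A : List (Option σ × Option σ)), IsAlignment A s t →
        editDist γ s t ≤ alignScore γ A := by
      intro s t A hA
      exact csInf_le ⟨0, by rintro x ⟨A', hA', rfl⟩; exact hlow A' hA'.1⟩ ⟨A, hA, rfl⟩
    have hle_Ed : ∀ (s t : List σ) (x : ℝ),
        (∀ A : List (Option σ × Option σ), IsAlignment A s t → x ≤ alignScore γ A) →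
        x ≤ editDist γ s t := by
      intro s t x hx
      exact le_csInf (EDaux.set_nonempty γ s t) (by rintro y ⟨A, hA, rfl⟩; exact hx A hA)
    refine ⟨?_, ?_, ?_, ?_⟩
    · intro s
      have hd : IsAlignment (s.map fun a => (some a, some a)) s s := by
        refine ⟨?_, ?_, ?_⟩
        · intro c hc; obtain ⟨a, _, rfl⟩ := List.mem_map.1 hc; simp
        · simp [List.filterMap_map, Function.comp_def, filterMap_some]
        · simp [List.filterMap_map, Function.comp_def, filterMap_some]
      have hs0 : alignScore γ (s.map fun a => (some a, some a)) = 0 := by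
        simp only [alignScore]
        apply List.sum_eq_zero
        intro x hx
        simp only [List.map_map, List.mem_map, Function.comp_def] at hx
        obtain ⟨a, _, rfl⟩ := hx
        exact hdiag a
      refine le_antisymm ?_ (hle_Ed s s 0 (fun A hA => hlow A hA.1))
      calc editDist γ s s ≤ alignScore γ (s.map fun a => (some a, some a)) := hEd_le s s _ hd
        _ = 0 := hs0
    · intro s t hst
      obtain ⟨e⟩ : Nonempty σ := by
        cases s with
        | nil =>
          cases t with
          | nil => exact absurd rfl hst
          | cons b _ => exact ⟨b⟩
        | cons a _ => exact ⟨a⟩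
      set F : Finset (Option σ × Option σ) :=
        Finset.univ.filter
          (fun c => c ≠ ((none : Option σ), (none : Option σ)) ∧
            ¬∃ a : σ, c = (some a, some a)) with hF
      have heF : ((some e : Option σ), (none : Option σ)) ∈ F := by simp [hF]
      have hFne : (F.image fun c => γ c.1 c.2).Nonempty := ⟨_, Finset.mem_image_of_mem _ heF⟩
      set ε := (F.image fun c => γ c.1 c.2).min' hFne with hε
      have hεpos : 0 < ε := by
        obtain ⟨p, hpF, hpval⟩ := Finset.mem_image.1 ((F.image fun c => γ c.1 c.2).min'_mem hFne)
        rw [hε, ← hpval]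
        simp only [hF, Finset.mem_filter, Finset.mem_univ, true_and] at hpF
        obtain ⟨hp1, hp2⟩ := hpF
        obtain ⟨x, y⟩ := p
        cases x with
        | none =>
          cases y with
          | none => exact absurd rfl hp1
          | some b => rw [← hsp b]; exact hpos b
        | some a =>
          cases y with
          | none => exact hpos a
          | some b =>
            refine hne a b fun hab => ?_
            exact hp2 ⟨b, by rw [hab]⟩
      refine lt_of_lt_of_le hεpos (hle_Ed s t ε ?_)
      rintro A ⟨hvA, hfA, hsA⟩
      have hbad : ∃ c ∈ A, ¬∃ a : σ, c = (some a, some a) := by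
        by_contra hall
        push_neg at hall
        apply hst
        rw [← hfA, ← hsA]
        exact EDaux.all_diag (by simpa using hall)
      obtain ⟨p, hpA, hp2⟩ := hbad
      have hpF : p ∈ F := by
        simp only [hF, Finset.mem_filter, Finset.mem_univ, true_and]
        exact ⟨hvA p hpA, hp2⟩
      have h1 : ε ≤ γ p.1 p.2 := Finset.min'_le _ _ (Finset.mem_image_of_mem _ hpF)
      have h2 : γ p.1 p.2 ≤ alignScore γ A := by
        simp only [alignScore]
        refine List.single_le_sum (fun x hx => ?_) _ (List.mem_map_of_mem hpA)
        obtain ⟨d, hd, rfl⟩ := List.mem_map.1 hx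
        exact hcol d (hvA d hd)
      linarith
    · have key : ∀ s t : List σ, editDist γ t s ≤ editDist γ s t := by
        intro s t
        refine le_csInf (EDaux.set_nonempty γ s t) ?_
        rintro x ⟨A, ⟨hvA, hfA, hsA⟩, rfl⟩
        have hB : IsAlignment (A.flatMap (EDaux.swapCol γ)) t s :=
          ⟨EDaux.swap_valid γ A hvA, by rw [EDaux.swap_fst]; exact hsA,
            by rw [EDaux.swap_snd]; exact hfA⟩
        calc editDist γ t s ≤ alignScore γ (A.flatMap (EDaux.swapCol γ)) := hEd_le t s _ hB
          _ ≤ alignScore γ A := EDaux.swap_score γ A hsp hsymc hvA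
      intro s t
      exact le_antisymm (key t s) (key s t)
    · intro s t u
      have key : ∀ x ∈ {x | ∃ A, IsAlignment A s t ∧ alignScore γ A = x},
          ∀ y ∈ {y | ∃ B, IsAlignment B t u ∧ alignScore γ B = y},
          editDist γ s u ≤ x + y := by
        rintro x ⟨A, ⟨hvA, hfA, hsA⟩, rfl⟩ y ⟨B, ⟨hvB, hfB, hsB⟩, rfl⟩
        have hinv : A.filterMap Prod.snd = B.filterMap Prod.fst := by rw [hsA, hfB]
        have hC : IsAlignment (EDaux.comp γ A B) s u :=
          ⟨EDaux.comp_valid γ A B hvA hvB, by rw [EDaux.comp_fst γ A B hinv]; exact hfA,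
            by rw [EDaux.comp_snd γ A B hinv]; exact hsB⟩
        calc editDist γ s u ≤ alignScore γ (EDaux.comp γ A B) := hEd_le s u _ hC
          _ ≤ alignScore γ A + alignScore γ B :=
            EDaux.comp_score γ A B hsp hpos hsymc hiv hv hinv
      have k1 : editDist γ s u - editDist γ t u ≤ editDist γ s t := by
        refine le_csInf (EDaux.set_nonempty γ s t) ?_
        intro x hx
        have h2 : editDist γ s u - x ≤ editDist γ t u := by
          refine le_csInf (EDaux.set_nonempty γ t u) ?_
          intro y hy
          have := key x hx y hy
          linarith
        linarith
      linarith
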